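/- For all natural numbers a, b with a + 2 ≤ b, the strict inequality (a! · b!) · ((a+1)^{a+1} · (b-1)^{b-1}) < ((a+1)! · (b-1)!) · (a^a · b^b) holds (with the convention 0^0 = 1); equivalently, a!·b!/(a^a·b^b) < (a+1)!·(b-1)!/((a+1)^{a+1}·(b-1)^{b-1}) as positive rationals. -/

import Mathlib

/-- Key step: `(n+1)^(2n+1) < n^n * (n+2)^(n+1)`, i.e. `(1+1/n)^n < (1+1/(n+1))^(n+1)`. -/
lemma key_step (n : ℕ) : (n + 1) ^ (2 * n + 1) < n ^ n * (n + 2) ^ (n + 1) := by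
  rcases Nat.eq_zero_or_pos n with rfl | hn
  · norm_num
  -- work in ℚ
  have hQ : ((n : ℚ) * (n + 2)) ^ (n + 1) > (n : ℚ) * (n + 1) ^ (2 * n + 1) := by
    set N : ℚ := (n : ℚ) with hN
    have hN1 : (1 : ℚ) ≤ N := by rw [hN]; exact_mod_cast hn
    have hpos : (0 : ℚ) < N + 1 := by linarith
    set t : ℚ := 1 / (N + 1) ^ 2 with ht
    have ht0 : 0 < t := by positivity
    have htu : t * (N + 1) ^ 2 = 1 := by
      rw [ht, div_mul_cancel₀ _ (pow_pos hpos 2).ne']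
    have ht1 : t ≤ 1 := by
      rw [ht, div_le_one (by positivity)]
      nlinarith
    have hB : 1 - N * t ≤ (1 - t) ^ n := by
      have := one_add_mul_le_pow (a := -t) (by linarith) n
      have h' : 1 + (n : ℚ) * (-t) ≤ (1 + -t) ^ n := this
      rw [hN]
      calc (1 : ℚ) - (n : ℚ) * t = 1 + (n : ℚ) * (-t) := by ring
        _ ≤ (1 + -t) ^ n := h'
        _ = (1 - t) ^ n := by ring_nf
    have h1 : (1 - N * t) * (1 - t) ≤ (1 - t) ^ (n + 1) := by
      rw [pow_succ]
      exact mul_le_mul_of_nonneg_right hB (by linarith)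
    have h2 : 1 - (N + 1) * t < (1 - t) ^ (n + 1) := by
      have hq : N * t ^ 2 > 0 := by positivity
      nlinarith [h1]
    -- multiply both sides by ((N+1)^2)^(n+1)
    have h3 : (1 - (N + 1) * t) * ((N + 1) ^ 2) ^ (n + 1) <
        (1 - t) ^ (n + 1) * ((N + 1) ^ 2) ^ (n + 1) :=
      mul_lt_mul_of_pos_right h2 (by positivity)
    have e1 : (1 - t) ^ (n + 1) * ((N + 1) ^ 2) ^ (n + 1) = (N * (N + 2)) ^ (n + 1) := by
      rw [← mul_pow]
      congr 1
      linear_combination (-1 : ℚ) * htu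
    have e2 : (1 - (N + 1) * t) * ((N + 1) ^ 2) ^ (n + 1) = N * (N + 1) ^ (2 * n + 1) := by
      have : ((N + 1) ^ 2) ^ (n + 1) = (N + 1) ^ (2 * n + 1) * (N + 1) := by
        rw [← pow_mul, ← pow_succ]
        ring_nf
      rw [this]
      have ht' : (N + 1) * t * (N + 1) = 1 := by linear_combination htu
      linear_combination (-(N + 1) ^ (2 * n + 1)) * ht'
    rw [e1, e2] at h3
    exact h3
  have hNat : n * (n + 1) ^ (2 * n + 1) < (n * (n + 2)) ^ (n + 1) := by
    exact_mod_cast hQ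
  rw [mul_pow, pow_succ] at hNat
  have : n * ((n + 1) ^ (2 * n + 1)) < n * (n ^ n * (n + 2) ^ (n + 1)) := by
    calc n * (n + 1) ^ (2 * n + 1) < n ^ n * n * (n + 2) ^ (n + 1) := hNat
    _ = n * (n ^ n * (n + 2) ^ (n + 1)) := by ring
  exact Nat.lt_of_mul_lt_mul_left this

/-- Monotonicity chain: for `a < c`, `(a+1)^a * c^c < a^a * (c+1)^c`. -/
lemma chain (c : ℕ) : ∀ a : ℕ, a < c → (a + 1) ^ a * c ^ c < a ^ a * (c + 1) ^ c := by
  induction c with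
  | zero => intro a h; omega
  | succ c ih =>
    intro a h
    rcases Nat.lt_succ_iff_lt_or_eq.mp h with h' | rfl
    · have h1 := ih a h'
      have h2 := key_step c
      have hmul : ((a + 1) ^ a * c ^ c) * ((c + 1) ^ (2 * c + 1)) <
          (a ^ a * (c + 1) ^ c) * (c ^ c * (c + 2) ^ (c + 1)) := by
        exact mul_lt_mul'' h1 h2 (Nat.zero_le _) (Nat.zero_le _)
      have e1 : ((a + 1) ^ a * c ^ c) * ((c + 1) ^ (2 * c + 1)) =
          (c ^ c * (c + 1) ^ c) * ((a + 1) ^ a * (c + 1) ^ (c + 1)) := by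
        rw [show 2 * c + 1 = c + (c + 1) by ring, pow_add]
        ring
      have e2 : (a ^ a * (c + 1) ^ c) * (c ^ c * (c + 2) ^ (c + 1)) =
          (c ^ c * (c + 1) ^ c) * (a ^ a * (c + 2) ^ (c + 1)) := by ring
      rw [e1, e2] at hmul
      have := Nat.lt_of_mul_lt_mul_left hmul
      simpa [show c + 1 + 1 = c + 2 by ring] using this
    · have := key_step a
      have e : (a + 1) ^ (2 * a + 1) = (a + 1) ^ a * (a + 1) ^ (a + 1) := by
        rw [← pow_add]; ring_nf
      rw [e] at this
      simpa [show a + 1 + 1 = a + 2 by ring] using this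

/-- For naturals a, b with a + 2 ≤ b,
(a!·b!)·((a+1)^{a+1}·(b−1)^{b−1}) < ((a+1)!·(b−1)!)·(a^a·b^b). -/
theorem stmt_1 (a b : ℕ) (hab : a + 2 ≤ b) :
    (Nat.factorial a * Nat.factorial b) * ((a + 1) ^ (a + 1) * (b - 1) ^ (b - 1)) <
      (Nat.factorial (a + 1) * Nat.factorial (b - 1)) * (a ^ a * b ^ b) := by
  obtain ⟨c, rfl⟩ : ∃ c, b = c + 1 := ⟨b - 1, by omega⟩
  have hac : a < c := by omega
  have key := chain c a hac
  simp only [Nat.add_sub_cancel, Nat.factorial_succ]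
  have M : 0 < Nat.factorial a * Nat.factorial c * (a + 1) * (c + 1) := by positivity
  have h2 := (mul_lt_mul_iff_right₀ M).mpr key
  calc Nat.factorial a * ((c + 1) * Nat.factorial c) * ((a + 1) ^ (a + 1) * c ^ c)
      = (Nat.factorial a * Nat.factorial c * (a + 1) * (c + 1)) * ((a + 1) ^ a * c ^ c) := by
        rw [pow_succ]; ring
    _ < (Nat.factorial a * Nat.factorial c * (a + 1) * (c + 1)) * (a ^ a * (c + 1) ^ c) := h2
    _ = (a + 1) * Nat.factorial a * Nat.factorial c * (a ^ a * (c + 1) ^ (c + 1)) := by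
        rw [pow_succ]; ring
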